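/- Let X* be the dual of a Banach space and r_{X*} its Opial modulus with respect to weak*-null sequences. If (x_n*) ⊆ X* with ‖x_n*‖ = 1 for all n, x_n* ⇀* x*, x* ≠ 0, and 0 < liminf_n ‖x_n* − x*‖ < ‖x*‖, then liminf_n ‖x_n* − x*‖ ≤ 1/(1 + r_{X*}(1)). -/

import Mathlib

open Filter Topology

variable {X : Type*} [NormedAddCommGroup X] [NormedSpace ℝ X]

/-- `x` is a weakly null sequence in `X`. -/
def WeakNull {X : Type*} [NormedAddCommGroup X] [NormedSpace ℝ X] (x : ℕ → X) : Prop :=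
  ∀ f : X →L[ℝ] ℝ, Tendsto (fun n => f (x n)) atTop (nhds 0)

/-- `f` converges to `g` in the weak* topology of the dual. -/
def WeakStarTendsto {X : Type*} [NormedAddCommGroup X] [NormedSpace ℝ X]
    (f : ℕ → X →L[ℝ] ℝ) (g : X →L[ℝ] ℝ) : Prop :=
  ∀ v : X, Tendsto (fun n => f n v) atTop (nhds (g v))

/-- `f` is a weak*-null sequence in the dual. -/
def WeakStarNull {X : Type*} [NormedAddCommGroup X] [NormedSpace ℝ X]
    (f : ℕ → X →L[ℝ] ℝ) : Prop :=
  WeakStarTendsto f 0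

/-- The coefficient `R(X)`. -/
noncomputable def RCoef (X : Type*) [NormedAddCommGroup X] [NormedSpace ℝ X] : ℝ :=
  sSup { r | ∃ (x : ℕ → X) (y : X), (∀ n, ‖x n‖ ≤ 1) ∧ WeakNull x ∧ ‖y‖ ≤ 1 ∧
    r = Filter.liminf (fun n => ‖x n + y‖) atTop }

/-- Opial's modulus of `X`. -/
noncomputable def opialModulus (X : Type*) [NormedAddCommGroup X] [NormedSpace ℝ X] (c : ℝ) : ℝ :=
  sInf { r | ∃ (x : ℕ → X) (y : X), c ≤ ‖y‖ ∧ WeakNull x ∧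
    1 ≤ Filter.liminf (fun n => ‖x n‖) atTop ∧
    r = Filter.liminf (fun n => ‖x n - y‖) atTop - 1 }

/-- Opial's modulus of the dual `X*`, with respect to weak*-null sequences. -/
noncomputable def opialModulusStar (X : Type*) [NormedAddCommGroup X] [NormedSpace ℝ X] (c : ℝ) : ℝ :=
  sInf { r | ∃ (f : ℕ → X →L[ℝ] ℝ) (g : X →L[ℝ] ℝ), c ≤ ‖g‖ ∧ WeakStarNull f ∧
    1 ≤ Filter.liminf (fun n => ‖f n‖) atTop ∧
    r = Filter.liminf (fun n => ‖f n - g‖) atTop - 1 }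

/-- Property(K) for `X`. -/
def PropertyK (X : Type*) [NormedAddCommGroup X] [NormedSpace ℝ X] : Prop :=
  ∃ K, 0 ≤ K ∧ K < 1 ∧ ∀ (x : ℕ → X) (y : X),
    WeakNull x → Tendsto (fun n => ‖x n‖) atTop (nhds 1) →
    Filter.liminf (fun n => ‖x n - y‖) atTop ≤ 1 → ‖y‖ ≤ K

/-- Property(K*) for the dual `X*`. -/
def PropertyKStar (X : Type*) [NormedAddCommGroup X] [NormedSpace ℝ X] : Prop :=
  ∃ K, 0 ≤ K ∧ K < 1 ∧ ∀ (f : ℕ → X →L[ℝ] ℝ) (g : X →L[ℝ] ℝ),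
    (∀ n, ‖f n‖ ≤ 1) → WeakStarNull f →
    Tendsto (fun n => ‖f n‖) atTop (nhds 1) →
    Filter.liminf (fun n => ‖f n - g‖) atTop ≤ 1 → ‖g‖ ≤ K


private lemma myLiminfNonneg {u : ℕ → ℝ} (h : ∀ n, 0 ≤ u n) :
    0 ≤ Filter.liminf u atTop := by
  rw [Filter.liminf_eq]
  exact Real.sSup_nonneg' ⟨0, Filter.Eventually.of_forall h, le_refl 0⟩

private lemma myTendstoOfNotCobounded {u : ℕ → ℝ}
    (h : ¬ Filter.IsCoboundedUnder (· ≥ ·) Filter.atTop u) :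
    Tendsto u atTop atTop := by
  rw [tendsto_atTop]
  intro b
  by_contra hb
  apply h
  refine ⟨b, fun a ha => ?_⟩
  rw [Filter.eventually_map] at ha
  by_contra hab
  push_neg at hab
  exact hb (ha.mono fun n hn => le_trans hab.le hn)

private lemma myLiminfZero {u : ℕ → ℝ} (h : Tendsto u atTop atTop) :
    Filter.liminf u atTop = 0 := by
  rw [Filter.liminf_eq]
  have huniv : {a : ℝ | ∀ᶠ n in atTop, a ≤ u n} = Set.univ :=
    Set.eq_univ_of_forall fun a => tendsto_atTop.1 h a
  rw [huniv, Real.sSup_univ]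

private lemma myKeyLB {X : Type*} [NormedAddCommGroup X] [NormedSpace ℝ X]
    (f' : ℕ → X →L[ℝ] ℝ) (g' : X →L[ℝ] ℝ) (hc : (1:ℝ) ≤ ‖g'‖)
    (hnull : WeakStarNull f')
    (hlim : 1 ≤ Filter.liminf (fun n => ‖f' n‖) atTop) :
    1 ≤ Filter.liminf (fun n => ‖f' n - g'‖) atTop := by
  by_cases hcb : Filter.IsCoboundedUnder (· ≥ ·) Filter.atTop (fun n => ‖f' n - g'‖)
  · refine le_trans hc ?_
    set L := Filter.liminf (fun n => ‖f' n - g'‖) atTop with hL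
    have hL0 : 0 ≤ L := myLiminfNonneg fun n => norm_nonneg _
    have key : ∀ v : X, ‖v‖ ≤ 1 → ‖g' v‖ ≤ L := by
      intro v hv
      have htend : Tendsto (fun n => ‖(f' n - g') v‖) atTop (nhds ‖g' v‖) := by
        have h1 : Tendsto (fun n => f' n v - g' v) atTop (nhds (0 - g' v)) := by
          have h0 : Tendsto (fun n => f' n v) atTop (nhds 0) := by
            have := hnull v; simpa using this
          exact h0.sub_const _
        rw [zero_sub] at h1
        have h2 := h1.norm
        rw [norm_neg] at h2
        simpa using h2
      refine le_of_forall_sub_le fun ε hε => ?_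
      have hev : ∀ᶠ n in atTop, ‖g' v‖ - ε ≤ ‖f' n - g'‖ := by
        have h2 : ∀ᶠ n in atTop, ‖g' v‖ - ε < ‖(f' n - g') v‖ :=
          htend.eventually (eventually_gt_nhds (by linarith))
        refine h2.mono fun n hn => ?_
        have h3 : ‖(f' n - g') v‖ ≤ ‖f' n - g'‖ * ‖v‖ := (f' n - g').le_opNorm v
        have h4 : ‖f' n - g'‖ * ‖v‖ ≤ ‖f' n - g'‖ :=
          mul_le_of_le_one_right (norm_nonneg _) hv
        linarith
      exact Filter.le_liminf_of_le hcb hev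
    refine ContinuousLinearMap.opNorm_le_bound _ hL0 fun v => ?_
    rcases eq_or_ne v 0 with rfl | hv
    · simp
    · have hv' : (0:ℝ) < ‖v‖ := norm_pos_iff.mpr hv
      have hunit : ‖(‖v‖⁻¹ • v : X)‖ ≤ 1 := by
        rw [norm_smul, Real.norm_eq_abs, abs_of_pos (inv_pos.mpr hv'),
          inv_mul_cancel₀ hv'.ne']
      have hk := key _ hunit
      rw [map_smul, smul_eq_mul, Real.norm_eq_abs, abs_mul,
        abs_of_pos (inv_pos.mpr hv')] at hk
      have hk2 : |g' v| ≤ L * ‖v‖ := by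
        rw [← mul_le_mul_iff_right₀ (inv_pos.mpr hv')]
        calc ‖v‖⁻¹ * |g' v| ≤ L := hk
          _ = ‖v‖⁻¹ * (L * ‖v‖) := by field_simp
      simpa [Real.norm_eq_abs] using hk2
  · exfalso
    have ht := myTendstoOfNotCobounded hcb
    have ht2 : Tendsto (fun n => ‖f' n‖) atTop atTop := by
      refine tendsto_atTop_mono (fun n => ?_)
        (tendsto_atTop_add_const_right _ (-‖g'‖) ht)
      have := norm_sub_le (f' n) g'
      linarith
    have := myLiminfZero ht2
    rw [this] at hlim
    linarith

theorem stmt6 (X : Type*) [NormedAddCommGroup X] [NormedSpace ℝ X] [CompleteSpace X]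
    (f : ℕ → X →L[ℝ] ℝ) (hf : ∀ n, ‖f n‖ = 1)
    (g : X →L[ℝ] ℝ) (hfg : WeakStarTendsto f g) (hg : g ≠ 0)
    (h0 : 0 < Filter.liminf (fun n => ‖f n - g‖) atTop)
    (hlt : Filter.liminf (fun n => ‖f n - g‖) atTop < ‖g‖) :
    Filter.liminf (fun n => ‖f n - g‖) atTop ≤ 1 / (1 + opialModulusStar X 1) := by
  classical
  set d := Filter.liminf (fun n => ‖f n - g‖) atTop with hd
  have hd0 : 0 < d := h0
  have hdinv : 0 < d⁻¹ := inv_pos.mpr hd0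
  set F : ℕ → X →L[ℝ] ℝ := fun n => d⁻¹ • (f n - g) with hF
  set G : X →L[ℝ] ℝ := -(d⁻¹ • g) with hG
  have hnormG : (1:ℝ) ≤ ‖G‖ := by
    have h1 : d⁻¹ * d ≤ d⁻¹ * ‖g‖ := mul_le_mul_of_nonneg_left hlt.le hdinv.le
    rw [inv_mul_cancel₀ hd0.ne'] at h1
    rw [hG, norm_neg, norm_smul d⁻¹ g, Real.norm_eq_abs, abs_of_pos hdinv]
    exact h1
  have hFnull : WeakStarNull F := by
    intro v
    have h1 : Tendsto (fun n => f n v - g v) atTop (nhds 0) := by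
      have := (hfg v).sub_const (g v)
      simpa using this
    have h2 := h1.const_mul d⁻¹
    simp only [mul_zero] at h2
    have heq : (fun n => F n v) = fun n => d⁻¹ * (f n v - g v) := by
      funext n
      simp [hF, ContinuousLinearMap.smul_apply, ContinuousLinearMap.sub_apply,
        smul_eq_mul]
    rw [heq]
    simpa using h2
  have hFn : ∀ n, ‖F n‖ = d⁻¹ * ‖f n - g‖ := fun n => by
    rw [hF]
    simp only []
    rw [norm_smul d⁻¹ (f n - g), Real.norm_eq_abs, abs_of_pos hdinv]
  have hlimF : 1 ≤ Filter.liminf (fun n => ‖F n‖) atTop := by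
    rw [Filter.liminf_eq]
    set A' := {a : ℝ | ∀ᶠ n in atTop, a ≤ ‖F n‖} with hA'
    have hbdd : BddAbove A' := by
      refine ⟨d⁻¹ * (1 + ‖g‖), fun a ha => ?_⟩
      have hub : ∀ n, ‖F n‖ ≤ d⁻¹ * (1 + ‖g‖) := fun n => by
        rw [hFn n]
        refine mul_le_mul_of_nonneg_left ?_ hdinv.le
        have := norm_sub_le (f n) g
        rw [hf n] at this
        linarith
      obtain ⟨n, hn⟩ := ha.exists
      exact le_trans hn (hub n)
    have hstep : d ≤ d * sSup A' := by
      have hdS : d = sSup {a | ∀ᶠ n in atTop, a ≤ ‖f n - g‖} := by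
        rw [hd, Filter.liminf_eq]
      rw [hdS]
      refine csSup_le ⟨0, Filter.Eventually.of_forall fun n => norm_nonneg _⟩
        fun a ha => ?_
      have hmem : d⁻¹ * a ∈ A' := ha.mono fun n hn => by
        rw [hFn n]; exact mul_le_mul_of_nonneg_left hn hdinv.le
      have h3 := le_csSup hbdd hmem
      calc a = d * (d⁻¹ * a) := by field_simp
        _ ≤ d * sSup A' := mul_le_mul_of_nonneg_left h3 hd0.le
    nlinarith [hstep, hd0]
  have hFG : (fun n => ‖F n - G‖) = fun n => d⁻¹ := by
    funext n
    have heq : F n - G = d⁻¹ • f n := by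
      rw [hF, hG, sub_neg_eq_add, ← smul_add]
      congr 1
      abel
    rw [heq, norm_smul d⁻¹ (f n), hf n, Real.norm_eq_abs, abs_of_pos hdinv, mul_one]
  have hlb : ∀ r ∈ { r | ∃ (f' : ℕ → X →L[ℝ] ℝ) (g' : X →L[ℝ] ℝ),
      (1:ℝ) ≤ ‖g'‖ ∧ WeakStarNull f' ∧
      1 ≤ Filter.liminf (fun n => ‖f' n‖) atTop ∧
      r = Filter.liminf (fun n => ‖f' n - g'‖) atTop - 1 }, (0:ℝ) ≤ r := by
    rintro r ⟨f', g', h1, h2, h3, h4⟩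
    have := myKeyLB f' g' h1 h2 h3
    rw [h4]
    linarith
  have hmem : d⁻¹ - 1 ∈ { r | ∃ (f' : ℕ → X →L[ℝ] ℝ) (g' : X →L[ℝ] ℝ),
      (1:ℝ) ≤ ‖g'‖ ∧ WeakStarNull f' ∧
      1 ≤ Filter.liminf (fun n => ‖f' n‖) atTop ∧
      r = Filter.liminf (fun n => ‖f' n - g'‖) atTop - 1 } :=
    ⟨F, G, hnormG, hFnull, hlimF, by rw [hFG, Filter.liminf_const]⟩
  have hop_le : opialModulusStar X 1 ≤ d⁻¹ - 1 := by
    rw [opialModulusStar]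
    exact csInf_le ⟨0, hlb⟩ hmem
  have hop0 : 0 ≤ opialModulusStar X 1 := by
    rw [opialModulusStar]
    exact Real.sInf_nonneg hlb
  rw [le_div_iff₀ (by linarith : (0:ℝ) < 1 + opialModulusStar X 1)]
  have hmul : d * (1 + opialModulusStar X 1) ≤ d * d⁻¹ :=
    mul_le_mul_of_nonneg_left (by linarith) hd0.le
  rw [mul_inv_cancel₀ hd0.ne'] at hmul
  exact hmul
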